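/- Let k be a field, Q = k[x_1, ..., x_d] a polynomial ring, m = (x_1, ..., x_d), and let f_1, ..., f_n be monomials of total degree at least 2 whose supports are pairwise incomparable, i.e., for i ≠ j the set of variables dividing f_i is not contained in the set of variables dividing f_j. Set I = (f_1, ..., f_n). For each i, choose a variable x_{b(i)} dividing f_i, and let J_i be the ideal of Q generated by f_i, by the elements x_{b(i)} − x_l for all variables x_l ≠ x_{b(i)} dividing f_i, and by all variables not dividing f_i. Then: I ⊆ J_i for every i; f_j ∈ mJ_i whenever j ≠ i; f_i ∉ mJ_i for every i; and for every g ∈ I, if g ∈ mJ_i for all i = 1, ..., n, then g ∈ mI. -/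
import Mathlib
open MvPolynomial

lemma aux_mem_m {k : Type*} [Field k] {d : ℕ} {p : MvPolynomial (Fin d) k}
    (h : constantCoeff p = 0) :
    p ∈ Ideal.span (Set.range (X : Fin d → MvPolynomial (Fin d) k)) := by
  rw [← Set.image_univ]
  rw [mem_ideal_span_X_image]
  intro mo hmo
  simp only [Set.mem_univ, true_and, exists_true_left]
  by_contra hc
  push_neg at hc
  have : mo = 0 := by ext i; exact hc i
  rw [mem_support_iff, this] at hmo
  exact hmo (by rwa [constantCoeff_eq] at h)

lemma aux_dvd {k : Type*} [Field k] {d : ℕ} (a : Fin d → ℕ) (l : Fin d)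
    (hl : a l ≠ 0) : (X l : MvPolynomial (Fin d) k) ∣ ∏ l', X l' ^ a l' :=
  dvd_trans (dvd_pow_self _ hl) (Finset.dvd_prod_of_mem _ (Finset.mem_univ l))

theorem stmt9 (k : Type*) [Field k] (d n : ℕ)
    (a : Fin n → Fin d → ℕ)
    (f : Fin n → MvPolynomial (Fin d) k)
    (hf : ∀ i, f i = ∏ l, X l ^ a i l)
    (hdeg : ∀ i, 2 ≤ ∑ l, a i l)
    (hsupp : ∀ i j, i ≠ j → ¬ ({l : Fin d | a i l ≠ 0} ⊆ {l : Fin d | a j l ≠ 0}))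
    (b : Fin n → Fin d) (hb : ∀ i, a i (b i) ≠ 0)
    (I : Ideal (MvPolynomial (Fin d) k)) (hI : I = Ideal.span (Set.range f))
    (m : Ideal (MvPolynomial (Fin d) k))
    (hm : m = Ideal.span (Set.range (X : Fin d → MvPolynomial (Fin d) k)))
    (J : Fin n → Ideal (MvPolynomial (Fin d) k))
    (hJ : ∀ i, J i = Ideal.span ({f i}
      ∪ ((fun l => X (b i) - X l) '' {l : Fin d | l ≠ b i ∧ a i l ≠ 0})
      ∪ (X '' {l : Fin d | a i l = 0}))) :
    (∀ i, I ≤ J i) ∧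
    (∀ i j, j ≠ i → f j ∈ m * J i) ∧
    (∀ i, f i ∉ m * J i) ∧
    (∀ g ∈ I, (∀ i, g ∈ m * J i) → g ∈ m * I) := by
  -- basic membership facts
  have hXm : ∀ l, (X l : MvPolynomial (Fin d) k) ∈ m := fun l => by
    rw [hm]; exact Ideal.subset_span ⟨l, rfl⟩
  have hfiJ : ∀ i, f i ∈ J i := fun i => by
    rw [hJ]; exact Ideal.subset_span (Or.inl (Or.inl rfl))
  have hXJ : ∀ i l, a i l = 0 → (X l : MvPolynomial (Fin d) k) ∈ J i := fun i l hl => by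
    rw [hJ]; exact Ideal.subset_span (Or.inr ⟨l, hl, rfl⟩)
  -- the variable outside supp f i dividing f j
  have hout : ∀ i j, j ≠ i → ∃ l, a j l ≠ 0 ∧ a i l = 0 := by
    intro i j hji
    have := hsupp j i hji
    rw [Set.not_subset] at this
    obtain ⟨l, h1, h2⟩ := this
    exact ⟨l, h1, by simpa using h2⟩
  -- part 1
  have part1 : ∀ i, I ≤ J i := by
    intro i
    rw [hI, Ideal.span_le]
    rintro _ ⟨j, rfl⟩
    by_cases hji : j = i
    · exact hji ▸ hfiJ i
    · obtain ⟨l, h1, h2⟩ := hout i j hji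
      obtain ⟨c, hc⟩ := aux_dvd (a j) l h1 (k := k)
      rw [hf j, hc]
      exact Ideal.mul_mem_right _ _ (hXJ i l h2)
  -- part 2
  have part2 : ∀ i j, j ≠ i → f j ∈ m * J i := by
    intro i j hji
    obtain ⟨l, h1, h2⟩ := hout i j hji
    -- find a second variable factor
    have key : ∃ l', a j l' ≠ 0 ∧ (X l' * X l : MvPolynomial (Fin d) k) ∣ f j := by
      by_cases h2l : 2 ≤ a j l
      · refine ⟨l, h1, ?_⟩
        rw [hf j]
        refine dvd_trans ?_ (Finset.dvd_prod_of_mem (fun l' => X l' ^ a j l')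
          (Finset.mem_univ l))
        calc (X l * X l : MvPolynomial (Fin d) k) = X l ^ 2 := (sq _).symm
        _ ∣ X l ^ a j l := pow_dvd_pow _ h2l
      · have hjl1 : a j l = 1 := by omega
        have : ∃ l', l' ≠ l ∧ a j l' ≠ 0 := by
          by_contra hcon
          push_neg at hcon
          have := hdeg j
          have hs : ∑ l', a j l' = a j l := by
            refine Finset.sum_eq_single l (fun l' _ hne => hcon l' hne) (by simp)
          omega
        obtain ⟨l', hne, hl'⟩ := this
        refine ⟨l', hl', ?_⟩
        rw [hf j, ← Finset.mul_prod_erase Finset.univ _ (Finset.mem_univ l)]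
        have hmem : l' ∈ Finset.univ.erase l := Finset.mem_erase.mpr ⟨hne, Finset.mem_univ l'⟩
        rw [← Finset.mul_prod_erase _ _ hmem]
        rw [show (X l : MvPolynomial (Fin d) k) ^ a j l * (X l' ^ a j l' *
          ∏ x ∈ (Finset.univ.erase l).erase l', X x ^ a j x)
          = (X l ^ a j l * X l' ^ a j l') * ∏ x ∈ (Finset.univ.erase l).erase l',
            X x ^ a j x by ring]
        exact Dvd.dvd.mul_right
          (mul_comm (X l' : MvPolynomial (Fin d) k) (X l) ▸
            mul_dvd_mul (dvd_pow_self _ h1) (dvd_pow_self _ hl')) _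
    obtain ⟨l', hl', hdvd⟩ := key
    obtain ⟨c, hc⟩ := hdvd
    rw [hc]
    exact Ideal.mul_mem_right _ _ (Ideal.mul_mem_mul (hXm l') (hXJ i l h2))
  -- part 3
  have part3 : ∀ i, f i ∉ m * J i := by
    intro i hmem
    set φ : MvPolynomial (Fin d) k →ₐ[k] Polynomial k :=
      aeval (fun l => if a i l = 0 then 0 else Polynomial.X)
    set D : ℕ := ∑ l, a i l with hD
    have hφf : φ (f i) = Polynomial.X ^ D := by
      rw [hf i, map_prod]
      have step : ∀ l : Fin d, φ (X l ^ a i l) = Polynomial.X ^ a i l := by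
        intro l
        rw [map_pow, aeval_X]
        by_cases h : a i l = 0 <;> simp [h]
      rw [Finset.prod_congr rfl fun l _ => step l]
      exact Finset.prod_pow_eq_pow_sum _ _ _
    have hJle : ∀ s ∈ J i, (Polynomial.X : Polynomial k) ^ D ∣ φ s := by
      intro s hs
      have : J i ≤ Ideal.comap φ (Ideal.span {(Polynomial.X : Polynomial k) ^ D}) := by
        rw [hJ, Ideal.span_le]
        rintro x (((rfl : x = f i) | ⟨l, ⟨hl1, hl2⟩, rfl⟩) | ⟨l, hl, rfl⟩)
        · show φ (f i) ∈ Ideal.span {(Polynomial.X : Polynomial k) ^ D}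
          rw [hφf]
          exact Ideal.subset_span rfl
        · show φ (X (b i) - X l) ∈ Ideal.span {(Polynomial.X : Polynomial k) ^ D}
          have : φ (X (b i) - X l) = 0 := by
            rw [map_sub, aeval_X, aeval_X, if_neg (hb i), if_neg hl2, sub_self]
          rw [this]; exact Ideal.zero_mem _
        · show φ (X l) ∈ Ideal.span {(Polynomial.X : Polynomial k) ^ D}
          have : φ (X l) = 0 := by rw [aeval_X, if_pos (show a i l = 0 from hl)]
          rw [this]; exact Ideal.zero_mem _
      exact Ideal.mem_span_singleton.mp (this hs)
    have hmle : ∀ r ∈ m, (Polynomial.X : Polynomial k) ∣ φ r := by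
      intro r hr
      have : m ≤ Ideal.comap φ (Ideal.span {(Polynomial.X : Polynomial k)}) := by
        rw [hm, Ideal.span_le]
        rintro _ ⟨l, rfl⟩
        show φ (X l) ∈ Ideal.span {(Polynomial.X : Polynomial k)}
        rw [aeval_X]
        by_cases h : a i l = 0
        · rw [if_pos h]; exact Ideal.zero_mem _
        · rw [if_neg h]; exact Ideal.subset_span rfl
      exact Ideal.mem_span_singleton.mp (this hr)
    have hdvd : (Polynomial.X : Polynomial k) ^ (D + 1) ∣ φ (f i) := by
      have hle : m * J i ≤ Ideal.comap φ
          (Ideal.span {(Polynomial.X : Polynomial k) ^ (D + 1)}) := by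
        refine Ideal.mul_le.mpr fun r hr s hs => ?_
        rw [Ideal.mem_comap, map_mul, Ideal.mem_span_singleton, pow_succ, mul_comm]
        exact mul_dvd_mul (hmle r hr) (hJle s hs)
      exact Ideal.mem_span_singleton.mp (hle hmem)
    rw [hφf] at hdvd
    have := Polynomial.natDegree_le_of_dvd hdvd (pow_ne_zero _ Polynomial.X_ne_zero)
    simp [Polynomial.natDegree_X_pow] at this
  -- part 4
  refine ⟨part1, part2, part3, ?_⟩
  intro g hg hgm
  rw [hI] at hg
  obtain ⟨c, hc⟩ := (Submodule.mem_span_range_iff_exists_fun _).mp hg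
  simp_rw [smul_eq_mul] at hc
  have hcoef : ∀ i, constantCoeff (c i) = 0 := by
    intro i
    by_contra hu
    set u := constantCoeff (c i) with hu'
    apply part3 i
    -- c i * f i ∈ m * J i
    have h1 : c i * f i ∈ m * J i := by
      have hsum : c i * f i = g - ∑ j ∈ Finset.univ.erase i, c j * f j := by
        rw [← hc, ← Finset.add_sum_erase _ _ (Finset.mem_univ i)]; ring
      rw [hsum]
      exact Ideal.sub_mem _ (hgm i)
        (Ideal.sum_mem _ fun j hj => Ideal.mul_mem_left _ _
          (part2 i j (Finset.mem_erase.mp hj).1))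
    have h2 : (c i - C u) * f i ∈ m * J i := by
      refine Ideal.mul_mem_mul ?_ (hfiJ i)
      rw [hm]
      exact aux_mem_m (by simp [hu'])
    have h3 : C u * f i ∈ m * J i := by
      have : C u * f i = c i * f i - (c i - C u) * f i := by ring
      rw [this]
      exact Ideal.sub_mem _ h1 h2
    have : f i = C u⁻¹ * (C u * f i) := by
      rw [← mul_assoc, ← C_mul, inv_mul_cancel₀ hu, C_1, one_mul]
    rw [this]
    exact Ideal.mul_mem_left _ _ h3
  rw [← hc]
  refine Ideal.sum_mem _ fun j _ => Ideal.mul_mem_mul ?_ ?_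
  · rw [hm]; exact aux_mem_m (hcoef j)
  · rw [hI]; exact Ideal.subset_span ⟨j, rfl⟩
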